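/- Let G = (V, E) be a finite directed graph with no self-loops and let A'_TV be the associated E × (V ⊔ E ⊔ E) matrix. Let Bas ⊆ V ⊔ E ⊔ E be a set of exactly |E| column indices such that the square E × Bas submatrix of A'_TV is invertible over ℚ; call all other indices nonbasic. Let E_NB = {f ∈ E : both the a⁺-copy and the a⁻-copy of f are nonbasic}. Then the undirected graph with vertex set V whose edges are the (undirected versions of the) edges in E_NB is acyclic, i.e., it is a spanning forest of G. -/

import Mathlib

/-- The matrix `A'_TV = [B −I I]` over `ℚ`, with rows indexed by edges and
columns indexed by `V ⊔ E ⊔ E`. -/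
def ATVQ' {V : Type*} [DecidableEq V] (E : Finset (V × V)) :
    Matrix {e : V × V // e ∈ E}
      (V ⊕ ({e : V × V // e ∈ E} ⊕ {e : V × V // e ∈ E})) ℚ :=
  fun e c =>
    match c with
    | Sum.inl v =>
        (if (e : V × V).1 = v then 1 else 0) - (if (e : V × V).2 = v then 1 else 0)
    | Sum.inr (Sum.inl f) => if e = f then -1 else 0
    | Sum.inr (Sum.inr f) => if e = f then 1 else 0

/-- `Bas` is a basis of columns of `A'_TV`: it has `|E|` columns and the
corresponding square `E × Bas` submatrix is invertible over `ℚ` (equivalently,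
the selected columns are linearly independent). -/
def IsBasisCols {V : Type*} [DecidableEq V] (E : Finset (V × V))
    (Bas : Finset (V ⊕ ({e : V × V // e ∈ E} ⊕ {e : V × V // e ∈ E}))) : Prop :=
  Bas.card = E.card ∧
    LinearIndependent ℚ
      (fun b : {c // c ∈ Bas} => fun e : {e : V × V // e ∈ E} => ATVQ' E e (b : _))

/-- The undirected graph `𝒢_NB` on `V` whose edges are the edges of `E` for
which both the `a⁺`- and the `a⁻`-copy are nonbasic. -/
def GNB {V : Type*} [DecidableEq V] (E : Finset (V × V))
    (Bas : Finset (V ⊕ ({e : V × V // e ∈ E} ⊕ {e : V × V // e ∈ E}))) :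
    SimpleGraph V where
  Adj u v := u ≠ v ∧ ∃ f : {e : V × V // e ∈ E},
    ((f : V × V) = (u, v) ∨ (f : V × V) = (v, u)) ∧
    Sum.inr (Sum.inl f) ∉ Bas ∧ Sum.inr (Sum.inr f) ∉ Bas
  symm := by
    constructor
    rintro u v ⟨huv, f, hf, h1, h2⟩
    exact ⟨huv.symm, f, hf.elim Or.inr Or.inl, h1, h2⟩
  loopless := by constructor; rintro u ⟨h, -⟩; exact h rfl


section Aux

variable {V : Type*} [DecidableEq V] (E : Finset (V × V))
  (Bas : Finset (V ⊕ ({e : V × V // e ∈ E} ⊕ {e : V × V // e ∈ E})))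

/-- The unit flow vector of a single step of a walk in `GNB`. -/
noncomputable def stepVec {u v : V} (h : (GNB E Bas).Adj u v) :
    {e : V × V // e ∈ E} → ℚ :=
  fun g => if g = h.2.choose then (if (h.2.choose : V × V) = (u, v) then 1 else -1) else 0

/-- The flow vector of a walk in `GNB`. -/
noncomputable def flow : ∀ {a b : V}, (GNB E Bas).Walk a b → ({e : V × V // e ∈ E} → ℚ)
  | _, _, SimpleGraph.Walk.nil => 0
  | _, _, SimpleGraph.Walk.cons h p => stepVec E Bas h + flow p

lemma stepVec_div {u w : V} (h : (GNB E Bas).Adj u w) (v : V) :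
    ∑ e, stepVec E Bas h e * ATVQ' E e (Sum.inl v) =
      (if u = v then 1 else 0) - (if w = v then 1 else 0) := by
  classical
  set f := h.2.choose with hf
  have hsum : ∑ e, stepVec E Bas h e * ATVQ' E e (Sum.inl v) =
      (if (f : V × V) = (u, w) then 1 else -1) * ATVQ' E f (Sum.inl v) := by
    rw [Finset.sum_eq_single f]
    · simp [stepVec, hf]
    · intro g _ hg
      simp [stepVec, hf, hg]
      exact fun hc => absurd (hc.trans hf.symm) hg
    · intro hfmem; exact absurd (Finset.mem_univ f) hfmem
  rw [hsum]
  rcases h.2.choose_spec.1 with h1 | h1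
  · rw [← hf] at h1
    simp [ATVQ', h1]
  · rw [← hf] at h1
    have hne : (f : V × V) ≠ (u, w) := by
      rw [h1]; intro hc
      exact h.1 (congrArg Prod.fst hc).symm
    have hc : ((w, u) : V × V) ≠ (u, w) := fun hc => h.1 (congrArg Prod.fst hc).symm
    simp only [ATVQ', h1, if_neg hc]
    ring

lemma flow_div {a b : V} (p : (GNB E Bas).Walk a b) (v : V) :
    ∑ e, flow E Bas p e * ATVQ' E e (Sum.inl v) =
      (if a = v then 1 else 0) - (if b = v then 1 else 0) := by
  induction p with
  | nil => simp [flow]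
  | cons h q ih =>
    simp only [flow, Pi.add_apply, add_mul, Finset.sum_add_distrib,
      stepVec_div E Bas h v, ih]
    ring

lemma flow_eq_zero_of_basic {a b : V} (p : (GNB E Bas).Walk a b)
    (f : {e : V × V // e ∈ E})
    (hf : Sum.inr (Sum.inl f) ∈ Bas ∨ Sum.inr (Sum.inr f) ∈ Bas) :
    flow E Bas p f = 0 := by
  induction p with
  | nil => rfl
  | cons h q ih =>
    have hst : stepVec E Bas h f = 0 := by
      rcases eq_or_ne f h.2.choose with rfl | hne
      · rcases hf with hf | hf
        · exact absurd hf h.2.choose_spec.2.1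
        · exact absurd hf h.2.choose_spec.2.2
      · simp [stepVec, hne]
    simp [flow, hst, ih]

lemma flow_eq_zero_of_not_mem_edges {a b : V} (p : (GNB E Bas).Walk a b)
    (g : {e : V × V // e ∈ E})
    (hg : s((g : V × V).1, (g : V × V).2) ∉ p.edges) :
    flow E Bas p g = 0 := by
  induction p with
  | nil => rfl
  | @cons u w b h q ih =>
    rw [SimpleGraph.Walk.edges_cons, List.mem_cons, not_or] at hg
    have hst : stepVec E Bas h g = 0 := by
      rcases eq_or_ne g h.2.choose with rfl | hne
      · exfalso
        apply hg.1
        rcases h.2.choose_spec.1 with h1 | h1 <;> rw [h1]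
        exact Sym2.eq_swap
      · simp [stepVec, hne]
    simp [flow, hst, ih hg.2]

end Aux

/-- For any basic solution of `A'_TV`, the undirected graph on
`V` formed by edges whose `a⁺`- and `a⁻`-variables are both nonbasic is acyclic,
i.e. a spanning forest of `G`. -/
theorem nonbasic_edges_form_spanning_forest
    {V : Type*} [Fintype V] [DecidableEq V] (E : Finset (V × V))
    (hloop : ∀ e ∈ E, e.1 ≠ e.2)
    (Bas : Finset (V ⊕ ({e : V × V // e ∈ E} ⊕ {e : V × V // e ∈ E})))
    (hBas : IsBasisCols E Bas) :
    (GNB E Bas).IsAcyclic := by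
  classical
  intro v p hp
  cases p with
  | nil => exact hp.ne_nil rfl
  | @cons _ w _ h q =>
    haveI : Nonempty {c // c ∈ Bas} := by
      refine Finset.nonempty_coe_sort.mpr (Finset.card_pos.mp ?_)
      rw [hBas.1]
      exact Finset.card_pos.mpr ⟨_, h.2.choose.2⟩
    set p := SimpleGraph.Walk.cons h q with hpdef
    set y : {e : V × V // e ∈ E} → ℚ := flow E Bas p with hy
    -- y is orthogonal to every basic column
    have horth : ∀ b : {c // c ∈ Bas},
        ∑ e, y e * ATVQ' E e (b : V ⊕ ({e : V × V // e ∈ E} ⊕ {e : V × V // e ∈ E})) = 0 := by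
      rintro ⟨b, hb⟩
      match b with
      | Sum.inl u =>
          rw [hy, flow_div]; ring
      | Sum.inr (Sum.inl f) =>
          have h0 : y f = 0 := flow_eq_zero_of_basic E Bas p f (Or.inl hb)
          rw [Finset.sum_eq_single f]
          · simp [ATVQ', h0]
          · intro g _ hg; simp [ATVQ', hg]
          · intro hfmem; exact absurd (Finset.mem_univ f) hfmem
      | Sum.inr (Sum.inr f) =>
          have h0 : y f = 0 := flow_eq_zero_of_basic E Bas p f (Or.inr hb)
          rw [Finset.sum_eq_single f]
          · simp [ATVQ', h0]
          · intro g _ hg; simp [ATVQ', hg]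
          · intro hfmem; exact absurd (Finset.mem_univ f) hfmem
    -- the basic columns span everything
    have hcard : Fintype.card {c // c ∈ Bas} =
        Module.finrank ℚ ({e : V × V // e ∈ E} → ℚ) := by
      rw [Fintype.card_coe, hBas.1, Module.finrank_fintype_fun_eq_card, Fintype.card_coe]
    have hspan := hBas.2.span_eq_top_of_card_eq_finrank hcard
    -- hence pairing against x ↦ ∑ y e * x e kills everything
    let φ : ({e : V × V // e ∈ E} → ℚ) →ₗ[ℚ] ℚ :=
      { toFun := fun x => ∑ e, y e * x e
        map_add' := by intro a b; simp [mul_add, Finset.sum_add_distrib]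
        map_smul' := by
          intro c a
          simp only [Pi.smul_apply, smul_eq_mul, RingHom.id_apply, Finset.mul_sum]
          exact Finset.sum_congr rfl fun e _ => by ring }
    have hker : ∀ x, φ x = 0 := by
      intro x
      have hx : x ∈ Submodule.span ℚ (Set.range fun b : {c // c ∈ Bas} =>
          fun e : {e : V × V // e ∈ E} => ATVQ' E e (b : _)) := by
        rw [hspan]; trivial
      refine Submodule.span_induction ?_ (map_zero φ)
        (fun a b _ _ ha hb => by rw [map_add, ha, hb, add_zero])
        (fun c a _ ha => by rw [map_smul, ha, smul_zero]) hx
      rintro z ⟨b, rfl⟩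
      exact horth b
    have hyy : ∑ e, y e * y e = 0 := hker y
    -- but y is nonzero at the witness of the first step of the cycle
    set f₀ := h.2.choose with hf₀
    have hnotmem : s((f₀ : V × V).1, (f₀ : V × V).2) ∉ q.edges := by
      have hnodup := hp.edges_nodup
      rw [hpdef, SimpleGraph.Walk.edges_cons, List.nodup_cons] at hnodup
      have hsym : s((f₀ : V × V).1, (f₀ : V × V).2) = s(v, w) := by
        rcases h.2.choose_spec.1 with h1 | h1 <;> rw [← hf₀] at h1 <;> rw [h1]
        exact Sym2.eq_swap
      rw [hsym]; exact hnodup.1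
    have hq0 : flow E Bas q f₀ = 0 := flow_eq_zero_of_not_mem_edges E Bas q f₀ hnotmem
    have hyf : y f₀ = (if (f₀ : V × V) = (v, w) then 1 else -1) := by
      rw [hy, hpdef]
      show stepVec E Bas h f₀ + flow E Bas q f₀ = _
      rw [hq0, add_zero]
      simp [stepVec, hf₀]
    have hyf0 : y f₀ ≠ 0 := by
      rw [hyf]; split <;> norm_num
    have := (Finset.sum_eq_zero_iff_of_nonneg
      (fun e _ => mul_self_nonneg (y e))).mp hyy f₀ (Finset.mem_univ f₀)
    exact hyf0 (mul_self_eq_zero.mp this)
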